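/- Let q ≥ 1, let γ₁ > ⋯ > γ_q be nonzero reals with γ₁ > 0, let δ = (δ₁, …, δ_q) with δᵢ ≥ 0, ε ≥ 0, k* ∈ ℝ, and form the regular dimension-reduced data: Δ = diag(γ₁, …, γ_q), d = 0, w₀ = δ when ε = 0, or Δ = diag(0, γ₁, …, γ_q), d = ε·e₁, w₀ = (0, δ) when ε > 0. Let W := {w : wᵀΔw + 2dᵀw = k*} be nonempty, Λ° := (−∞, 1/γ₁) if γ_q > 0 and (1/γ_q, 1/γ₁) if γ_q < 0, f(λ) := Σᵢ γᵢδᵢ²/(1 − λγᵢ)² + 2ε²λ − k*, W(λ) := {w ∈ W : (I − λΔ)w = w₀ + λd}, W∘ := ⋃_{λ∈Λ°} W(λ), W₁ := W(1/γ₁), and, when γ_q < 0, W_q := W(1/γ_q). Suppose the problem is singly-Lagrangian, i.e. either [ε = 0, k* = 0, δ ≠ 0 and γ_q < 0], or [ε = 0 and k* ≠ 0], or ε > 0. Then exactly one of the sets W∘, W₁ (and W_q when γ_q < 0) is nonempty, and that nonempty set equals the set of global minimisers of ‖w − w₀‖² over W. Specifically: if γ_q > 0 then inf_{Λ°} f <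 0 and the minimiser set is W∘ or W₁ according as sup_{Λ°} f > 0 or sup_{Λ°} f ≤ 0; if γ_q < 0 then the minimiser set is W∘, W₁ or W_q according as inf_{Λ°} f < 0 < sup_{Λ°} f, sup_{Λ°} f ≤ 0, or inf_{Λ°} f ≥ 0. -/

import Mathlib

open Matrix
open Matrix Filter Set Topology

namespace Stmt19Aux

private lemma coord_id (lam gx b e s t : ℝ) (ht : (1 - lam * gx) * t = b + lam * e) :
    ((s - b)^2 - lam * (gx * s^2) - 2 * lam * (e * s))
      - ((t - b)^2 - lam * (gx * t^2) - 2 * lam * (e * t))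
      = (1 - lam * gx) * (s - t)^2 := by
  linear_combination (2 * (s - t)) * ht

variable {ι : Type*} [Fintype ι]

noncomputable def Qf (G D : ι → ℝ) (w : ι → ℝ) : ℝ :=
  (∑ x, G x * w x ^ 2) + 2 * ∑ x, D x * w x

noncomputable def Lf (W0 : ι → ℝ) (w : ι → ℝ) : ℝ := ∑ x, (w x - W0 x)^2

lemma identity (G D W0 : ι → ℝ) (k lam : ℝ) (t : ι → ℝ)
    (htN : ∀ x, (1 - lam * G x) * t x = W0 x + lam * D x)
    (w : ι → ℝ) (hw : Qf G D w = k) (ht : Qf G D t = k) :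
    Lf W0 w - Lf W0 t = ∑ x, (1 - lam * G x) * (w x - t x)^2 := by
  have e1 : ∀ v : ι → ℝ, Lf W0 v - lam * (Qf G D v - k)
      = lam * k + ∑ x, ((v x - W0 x)^2 - lam * (G x * v x^2) - 2*lam*(D x * v x)) := by
    intro v
    have h1 : ∑ x, ((v x - W0 x)^2 - lam * (G x * v x^2) - 2*lam*(D x * v x))
        = (∑ x, (v x - W0 x)^2) - lam * (∑ x, G x * v x^2) - (2*lam) * (∑ x, D x * v x) := by
      rw [Finset.sum_sub_distrib, Finset.sum_sub_distrib, Finset.mul_sum, Finset.mul_sum]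
    rw [h1]
    simp only [Lf, Qf]
    ring
  have e2 := e1 w; rw [hw, sub_self, mul_zero, sub_zero] at e2
  have e3 := e1 t; rw [ht, sub_self, mul_zero, sub_zero] at e3
  rw [e2, e3, add_sub_add_left_eq_sub, ← Finset.sum_sub_distrib]
  exact Finset.sum_congr rfl fun x _ => coord_id lam (G x) (W0 x) (D x) (w x) (t x) (htN x)

lemma key_min (G D W0 : ι → ℝ) (k lam : ℝ) (hc : ∀ x, 0 ≤ 1 - lam * G x)
    (t : ι → ℝ) (ht : Qf G D t = k)
    (htN : ∀ x, (1 - lam * G x) * t x = W0 x + lam * D x) :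
    (∀ w, Qf G D w = k → Lf W0 t ≤ Lf W0 w) ∧
    (∀ w, Qf G D w = k → Lf W0 w ≤ Lf W0 t →
      ∀ x, (1 - lam * G x) * w x = W0 x + lam * D x) := by
  constructor
  · intro w hw
    have hid := identity G D W0 k lam t htN w hw ht
    have : 0 ≤ ∑ x, (1 - lam * G x) * (w x - t x)^2 :=
      Finset.sum_nonneg fun x _ => mul_nonneg (hc x) (sq_nonneg _)
    linarith
  · intro w hw hle x
    have hid := identity G D W0 k lam t htN w hw ht
    have hz : ∑ x, (1 - lam * G x) * (w x - t x)^2 = 0 := le_antisymm (by linarith) (Finset.sum_nonneg fun x _ => mul_nonneg (hc x) (sq_nonneg _))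
    have hx0 : (1 - lam * G x) * (w x - t x)^2 = 0 :=
      (Finset.sum_eq_zero_iff_of_nonneg (fun x _ => mul_nonneg (hc x) (sq_nonneg _))).1 hz x (Finset.mem_univ x)
    rcases mul_eq_zero.1 hx0 with h | h
    · rw [h, zero_mul]
      rw [← htN x, h, zero_mul]
    · have : w x = t x := by have := pow_eq_zero_iff (n := 2) (by norm_num) |>.1 h; linarith [sub_eq_zero.1 this]
      rw [this]; exact htN x


variable {m' q : ℕ} (γ δ : Fin q → ℝ) (ε : ℝ)

noncomputable def Gs : Fin m' ⊕ Fin q → ℝ := Sum.elim (fun _ => 0) γ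
noncomputable def Ds (m' : ℕ) : Fin m' ⊕ Fin q → ℝ := Sum.elim (fun _ => ε) fun _ => 0
noncomputable def Ws : Fin m' ⊕ Fin q → ℝ := Sum.elim (fun _ => 0) δ

lemma quad_eq (w : Fin m' ⊕ Fin q → ℝ) :
    w ⬝ᵥ (diagonal (Gs (m':=m') γ)).mulVec w + 2 * ((Ds ε m') ⬝ᵥ w)
      = Qf (Gs γ) (Ds ε m') w := by
  simp only [Qf, dotProduct, mulVec_diagonal]
  congr 1
  exact Finset.sum_congr rfl fun x _ => by ring

lemma L_eq (w : Fin m' ⊕ Fin q → ℝ) :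
    (w - Ws (m':=m') δ) ⬝ᵥ (w - Ws δ) = Lf (Ws δ) w := by
  simp only [Lf, dotProduct, Pi.sub_apply]
  exact Finset.sum_congr rfl fun x _ => by ring

lemma normal_iff (lam : ℝ) (w : Fin m' ⊕ Fin q → ℝ) :
    ((1 : Matrix (Fin m' ⊕ Fin q) (Fin m' ⊕ Fin q) ℝ)
        - lam • diagonal (Gs (m':=m') γ)).mulVec w = Ws δ + lam • Ds ε m'
      ↔ ∀ x, (1 - lam * Gs (m':=m') γ x) * w x = Ws δ x + lam * Ds ε m' x := by
  rw [funext_iff]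
  refine forall_congr' fun x => ?_
  rw [sub_mulVec, smul_mulVec]
  simp only [one_mulVec, Pi.sub_apply, Pi.smul_apply, Pi.add_apply, smul_eq_mul,
    mulVec_diagonal]
  constructor <;> intro h <;> linarith [h]

lemma Qf_sum (w : Fin m' ⊕ Fin q → ℝ) :
    Qf (Gs (m':=m') γ) (Ds ε m') w
      = (∑ i, γ i * w (Sum.inr i) ^ 2) + 2 * ∑ a : Fin m', ε * w (Sum.inl a) := by
  simp only [Qf, Gs, Ds, Fintype.sum_sum_type, Sum.elim_inl, Sum.elim_inr, zero_mul,
    Finset.sum_const_zero, zero_add, add_zero]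


variable {q : ℕ} (γ δ : Fin q → ℝ) (ε kstar : ℝ)

noncomputable def F (γ δ : Fin q → ℝ) (ε kstar : ℝ) : ℝ → ℝ :=
  fun lam => (∑ i, γ i * δ i ^ 2 / (1 - lam * γ i) ^ 2) + 2 * ε ^ 2 * lam - kstar

lemma continuousAt_F {c : ℝ} (hc : ∀ i, 1 - c * γ i ≠ 0 ∨ δ i = 0) :
    ContinuousAt (F γ δ ε kstar) c := by
  apply ContinuousAt.sub ?_ continuousAt_const
  apply ContinuousAt.add ?_ (by fun_prop)
  have hterm : ∀ i ∈ Finset.univ, Tendsto (fun lam => γ i * δ i ^ 2 / (1 - lam * γ i) ^ 2)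
      (𝓝 c) (𝓝 (γ i * δ i ^ 2 / (1 - c * γ i) ^ 2)) := by
    intro i _
    rcases hc i with h | h
    · exact ContinuousAt.div (by fun_prop) (by fun_prop) (pow_ne_zero _ h)
    · have he : (fun lam => γ i * δ i ^ 2 / (1 - lam * γ i) ^ 2) = fun _ : ℝ => (0:ℝ) := by
        funext lam; rw [h]; ring
      rw [he, show γ i * δ i ^ 2 / (1 - c * γ i) ^ 2 = 0 by rw [h]; ring]
      exact tendsto_const_nhds
  exact tendsto_finset_sum _ hterm

lemma tendsto_inv_sq_boundary (j : Fin q) (hγj : γ j ≠ 0) :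
    Tendsto (fun lam => ((1 - lam * γ j) ^ 2)⁻¹) (𝓝[≠] (γ j)⁻¹) atTop := by
  apply tendsto_inv_nhdsGT_zero.comp
  rw [tendsto_nhdsWithin_iff]
  constructor
  · have hval : ((1 : ℝ) - (γ j)⁻¹ * γ j) ^ 2 = 0 := by
      rw [inv_mul_cancel₀ hγj]; ring
    have hcont : Continuous (fun lam : ℝ => (1 - lam * γ j) ^ 2) := by fun_prop
    have := hcont.tendsto ((γ j)⁻¹)
    rw [hval] at this
    exact this.mono_left nhdsWithin_le_nhds
  · filter_upwards [eventually_mem_nhdsWithin] with lam (hlam : lam ≠ (γ j)⁻¹)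
    have hne' : 1 - lam * γ j ≠ 0 := by
      intro h
      apply hlam
      have : lam * γ j = 1 := by linarith
      field_simp [eq_one_div_of_mul_eq_one_left this]
      exact this
    exact mem_Ioi.2 (lt_of_le_of_ne (sq_nonneg _) (Ne.symm (pow_ne_zero 2 hne')))

lemma F_split (j : Fin q) : F γ δ ε kstar = fun lam =>
    γ j * δ j ^ 2 / (1 - lam * γ j) ^ 2 +
      ((∑ i ∈ Finset.univ.erase j, γ i * δ i ^ 2 / (1 - lam * γ i) ^ 2) + 2 * ε ^ 2 * lam - kstar) := by
  funext lam
  rw [F, ← Finset.add_sum_erase _ _ (Finset.mem_univ j)]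
  ring

lemma continuousAt_rest (j : Fin q) {c : ℝ} (hsep : ∀ i, i ≠ j → 1 - c * γ i ≠ 0) :
    ContinuousAt (fun lam =>
      (∑ i ∈ Finset.univ.erase j, γ i * δ i ^ 2 / (1 - lam * γ i) ^ 2) + 2 * ε ^ 2 * lam - kstar) c := by
  apply ContinuousAt.sub ?_ continuousAt_const
  apply ContinuousAt.add ?_ (by fun_prop)
  have hterm : ∀ i ∈ Finset.univ.erase j,
      Tendsto (fun lam => γ i * δ i ^ 2 / (1 - lam * γ i) ^ 2)
        (𝓝 c) (𝓝 (γ i * δ i ^ 2 / (1 - c * γ i) ^ 2)) := by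
    intro i hi
    exact ContinuousAt.div (by fun_prop) (by fun_prop)
      (pow_ne_zero _ (hsep i (Finset.mem_erase.1 hi).1))
  exact tendsto_finset_sum _ hterm

lemma tendsto_F_boundary_top (j : Fin q) (hγj : γ j ≠ 0)
    (hsep : ∀ i, i ≠ j → 1 - (γ j)⁻¹ * γ i ≠ 0) (hnum : 0 < γ j * δ j ^ 2) :
    Tendsto (F γ δ ε kstar) (𝓝[≠] (γ j)⁻¹) atTop := by
  rw [F_split γ δ ε kstar j]
  have hterm : Tendsto (fun lam => γ j * δ j ^ 2 / (1 - lam * γ j) ^ 2)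
      (𝓝[≠] (γ j)⁻¹) atTop := by
    simp only [div_eq_mul_inv]
    exact (tendsto_inv_sq_boundary γ j hγj).const_mul_atTop hnum
  set R := (∑ i ∈ Finset.univ.erase j, γ i * δ i ^ 2 / (1 - (γ j)⁻¹ * γ i) ^ 2)
      + 2 * ε ^ 2 * (γ j)⁻¹ - kstar with hR
  apply tendsto_atTop_add_right_of_le' _ (R - 1) hterm
  exact ((continuousAt_rest γ δ ε kstar j hsep).tendsto.mono_left nhdsWithin_le_nhds).eventually
    (eventually_ge_nhds (sub_one_lt R))

lemma tendsto_F_boundary_bot (j : Fin q) (hγj : γ j ≠ 0)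
    (hsep : ∀ i, i ≠ j → 1 - (γ j)⁻¹ * γ i ≠ 0) (hnum : γ j * δ j ^ 2 < 0) :
    Tendsto (F γ δ ε kstar) (𝓝[≠] (γ j)⁻¹) atBot := by
  rw [F_split γ δ ε kstar j]
  have hterm : Tendsto (fun lam => γ j * δ j ^ 2 / (1 - lam * γ j) ^ 2)
      (𝓝[≠] (γ j)⁻¹) atBot := by
    simp only [div_eq_mul_inv]
    exact (tendsto_const_mul_atBot_of_neg hnum).2 (tendsto_inv_sq_boundary γ j hγj)
  set R := (∑ i ∈ Finset.univ.erase j, γ i * δ i ^ 2 / (1 - (γ j)⁻¹ * γ i) ^ 2)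
      + 2 * ε ^ 2 * (γ j)⁻¹ - kstar with hR
  apply tendsto_atBot_add_right_of_ge' _ (R + 1) hterm
  exact ((continuousAt_rest γ δ ε kstar j hsep).tendsto.mono_left nhdsWithin_le_nhds).eventually
    (eventually_le_nhds (lt_add_one R))

lemma tendsto_sum_atBot (hγpos : ∀ i, 0 < γ i) :
    Tendsto (fun lam => ∑ i, γ i * δ i ^ 2 / (1 - lam * γ i) ^ 2) atBot (𝓝 0) := by
  have h : Tendsto (fun lam => ∑ i, γ i * δ i ^ 2 / (1 - lam * γ i) ^ 2) atBot
      (𝓝 (∑ i : Fin q, (0:ℝ))) := by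
    apply tendsto_finset_sum
    intro i _
    have h1 : Tendsto (fun lam : ℝ => lam * γ i) atBot atBot :=
      (tendsto_mul_const_atBot_of_pos (hγpos i)).2 tendsto_id
    have h2 : Tendsto (fun lam : ℝ => 1 - lam * γ i) atBot atTop := by
      simp only [sub_eq_add_neg]
      exact tendsto_atTop_add_const_left _ 1 (tendsto_neg_atTop_iff.2 h1)
    have h3 : Tendsto (fun lam : ℝ => (1 - lam * γ i) ^ 2) atBot atTop :=
      (tendsto_pow_atTop two_ne_zero).comp h2
    have h4 : Tendsto (fun lam : ℝ => ((1 - lam * γ i) ^ 2)⁻¹) atBot (𝓝 0) :=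
      h3.inv_tendsto_atTop
    have h5 : Tendsto (fun lam : ℝ => (γ i * δ i ^ 2) * ((1 - lam * γ i) ^ 2)⁻¹) atBot
        (𝓝 ((γ i * δ i ^ 2) * 0)) := tendsto_const_nhds.mul h4
    rw [mul_zero] at h5
    simpa only [div_eq_mul_inv] using h5
  simpa using h

lemma ivt_zero {f : ℝ → ℝ} {s : Set ℝ} (hord : s.OrdConnected)
    (hcont : ∀ x ∈ s, ContinuousAt f x) {a b : ℝ} (ha : a ∈ s) (hb : b ∈ s)
    (hfa : f a < 0) (hfb : 0 < f b) : ∃ c ∈ s, f c = 0 := by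
  rcases le_total a b with h | h
  · have hsub : Icc a b ⊆ s := hord.out ha hb
    obtain ⟨c, hc, hfc⟩ := intermediate_value_Icc h
      (fun x hx => (hcont x (hsub hx)).continuousWithinAt) ⟨hfa.le, hfb.le⟩
    exact ⟨c, hsub hc, hfc⟩
  · have hsub : Icc b a ⊆ s := hord.out hb ha
    obtain ⟨c, hc, hfc⟩ := intermediate_value_Icc' h
      (fun x hx => (hcont x (hsub hx)).continuousWithinAt) ⟨hfa.le, hfb.le⟩
    exact ⟨c, hsub hc, hfc⟩

end Stmt19Aux

open Stmt19Aux in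

/-- Resolution of a singly-Lagrangian regular dimension-reduced canonical form
(coordinates `Fin m' ⊕ Fin q`, `m' = 0` iff `ε = 0`). With `W∘`, `W₁`, `W_q` the
potential Lagrangian solution sets and `M` the set of global minimisers of
`‖w − w₀‖²` over `W`: if `γ_q > 0` then `inf f < 0` and `M = W∘` or `M = W₁`
according as `sup f > 0` or `sup f ≤ 0` (the other set being empty); if `γ_q < 0`
then `M = W∘`, `W₁` or `W_q` according as `inf f < 0 < sup f`, `sup f ≤ 0` or
`inf f ≥ 0` (the other two sets being empty). In particular exactly one of the
potential Lagrangian solution sets is nonempty and it equals `M`. -/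
theorem stmt19 {q : ℕ} (hq : 0 < q) (γ : Fin q → ℝ) (hanti : StrictAnti γ)
    (hne : ∀ i, γ i ≠ 0) (hpos : 0 < γ ⟨0, hq⟩)
    (δ : Fin q → ℝ) (hδ : ∀ i, 0 ≤ δ i) (ε : ℝ) (hε : 0 ≤ ε) (kstar : ℝ)
    (m' : ℕ) (hm'le : m' ≤ 1) (hm' : ε = 0 ↔ m' = 0) :
    let i0 : Fin q := ⟨0, hq⟩
    let iq : Fin q := ⟨q - 1, Nat.sub_lt hq one_pos⟩
    let Δ : Matrix (Fin m' ⊕ Fin q) (Fin m' ⊕ Fin q) ℝ :=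
      Matrix.diagonal (Sum.elim (fun _ => (0 : ℝ)) γ)
    let d : Fin m' ⊕ Fin q → ℝ := Sum.elim (fun _ => ε) (fun _ => 0)
    let w0 : Fin m' ⊕ Fin q → ℝ := Sum.elim (fun _ => (0 : ℝ)) δ
    let W : Set (Fin m' ⊕ Fin q → ℝ) := {w | w ⬝ᵥ Δ.mulVec w + 2 * (d ⬝ᵥ w) = kstar}
    let L : (Fin m' ⊕ Fin q → ℝ) → ℝ := fun w => (w - w0) ⬝ᵥ (w - w0)
    let M : Set (Fin m' ⊕ Fin q → ℝ) := {w ∈ W | ∀ w' ∈ W, L w ≤ L w'}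
    let Λ : Set ℝ := if 0 < γ iq then Set.Iio (γ i0)⁻¹ else Set.Ioo (γ iq)⁻¹ (γ i0)⁻¹
    let f : ℝ → ℝ := fun lam =>
      (∑ i, γ i * δ i ^ 2 / (1 - lam * γ i) ^ 2) + 2 * ε ^ 2 * lam - kstar
    let Weq : ℝ → Set (Fin m' ⊕ Fin q → ℝ) := fun lam =>
      {w ∈ W | ((1 : Matrix (Fin m' ⊕ Fin q) (Fin m' ⊕ Fin q) ℝ) - lam • Δ).mulVec w
          = w0 + lam • d}
    let Wcirc : Set (Fin m' ⊕ Fin q → ℝ) := ⋃ lam ∈ Λ, Weq lam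
    let W1 : Set (Fin m' ⊕ Fin q → ℝ) := Weq (γ i0)⁻¹
    let Wq : Set (Fin m' ⊕ Fin q → ℝ) := Weq (γ iq)⁻¹
    W.Nonempty →
    ((ε = 0 ∧ kstar = 0 ∧ δ ≠ 0 ∧ γ iq < 0) ∨ (ε = 0 ∧ kstar ≠ 0) ∨ 0 < ε) →
      ((0 < γ iq →
          (∃ lam ∈ Λ, f lam < 0) ∧
          ((∃ lam ∈ Λ, 0 < f lam) → (M = Wcirc ∧ W1 = ∅)) ∧
          ((∀ lam ∈ Λ, f lam ≤ 0) → (M = W1 ∧ Wcirc = ∅))) ∧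
       (γ iq < 0 →
          (((∃ lam ∈ Λ, f lam < 0) ∧ (∃ lam ∈ Λ, 0 < f lam)) →
              (M = Wcirc ∧ W1 = ∅ ∧ Wq = ∅)) ∧
          ((∀ lam ∈ Λ, f lam ≤ 0) → (M = W1 ∧ Wcirc = ∅ ∧ Wq = ∅)) ∧
          ((∀ lam ∈ Λ, 0 ≤ f lam) → (M = Wq ∧ Wcirc = ∅ ∧ W1 = ∅)))) := by
  intro i0 iq Δ d w0 W L M Λ f Weq Wcirc W1 Wq
  intro hWne hSingly
  -- definitional equations for the `let`s
  have hΛdef : Λ = (if 0 < γ iq then Set.Iio (γ i0)⁻¹ else Set.Ioo (γ iq)⁻¹ (γ i0)⁻¹) := rfl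
  have hfF : f = F γ δ ε kstar := rfl
  have hWcircdef : Wcirc = ⋃ lam ∈ Λ, Weq lam := rfl
  -- order facts
  have hγle : ∀ i, γ i ≤ γ i0 := fun i => hanti.antitone (Fin.le_def.mpr (Nat.zero_le _))
  have hγlt : ∀ i, i ≠ i0 → γ i < γ i0 :=
    fun i h => hanti (lt_of_le_of_ne (Fin.le_def.mpr (Nat.zero_le _)) (Ne.symm h))
  have hγgeq : ∀ i, γ iq ≤ γ i :=
    fun i => hanti.antitone (Fin.le_def.mpr (Nat.le_pred_of_lt i.isLt))
  have hγgtq : ∀ i, i ≠ iq → γ iq < γ i :=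
    fun i h => hanti (lt_of_le_of_ne (Fin.le_def.mpr (Nat.le_pred_of_lt i.isLt)) h)
  have hi0pos : (0:ℝ) < (γ i0)⁻¹ := inv_pos.2 hpos
  have hme : (m' : ℝ) * ε ^ 2 = ε ^ 2 := by
    interval_cases m'
    · simp [hm'.mpr rfl]
    · simp
  -- membership translations
  have hWmem : ∀ w, w ∈ W ↔ Qf (Gs (m':=m') γ) (Ds ε m') w = kstar := by
    intro w
    have h0 : w ∈ W ↔
        w ⬝ᵥ (Matrix.diagonal (Gs (m':=m') γ)).mulVec w + 2 * (Ds ε m' ⬝ᵥ w) = kstar := Iff.rfl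
    rw [h0, quad_eq]
  have hLeq : ∀ w, L w = Lf (Ws (m':=m') δ) w := fun w => L_eq δ w
  have hWeqmem : ∀ lam w, w ∈ Weq lam ↔ (w ∈ W ∧
      ∀ x, (1 - lam * Gs (m':=m') γ x) * w x = Ws δ x + lam * Ds ε m' x) := by
    intro lam w
    have h0 : w ∈ Weq lam ↔ (w ∈ W ∧
        ((1 : Matrix (Fin m' ⊕ Fin q) (Fin m' ⊕ Fin q) ℝ)
          - lam • Matrix.diagonal (Gs (m':=m') γ)).mulVec w = Ws δ + lam • Ds ε m') := Iff.rfl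
    rw [h0, normal_iff]
  have hMmem : ∀ w, w ∈ M ↔ (w ∈ W ∧ ∀ w' ∈ W, Lf (Ws (m':=m') δ) w ≤ Lf (Ws δ) w') := by
    intro w
    have h0 : w ∈ M ↔ (w ∈ W ∧ ∀ w' ∈ W, L w ≤ L w') := Iff.rfl
    rw [h0]; simp only [hLeq]
  have hWcmem : ∀ w, w ∈ Wcirc ↔ ∃ mu ∈ Λ, w ∈ Weq mu := by
    intro w; rw [hWcircdef]; simp only [Set.mem_iUnion, exists_prop]
  -- lifting coefficient positivity to the sum type
  have hlift : ∀ lam, (∀ i, 0 ≤ 1 - lam * γ i) →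
      ∀ x, 0 ≤ 1 - lam * Gs (m':=m') γ x := by
    intro lam h x
    cases x with
    | inl a => simp [Gs]
    | inr i => simpa [Gs] using h i
  -- the fundamental characterization: a Lagrangian point is the set of minimizers
  have hM_eq : ∀ lam, (∀ x, 0 ≤ 1 - lam * Gs (m':=m') γ x) →
      (Weq lam).Nonempty → M = Weq lam := by
    rintro lam hc ⟨t, htmem⟩
    obtain ⟨htW, htN⟩ := (hWeqmem lam t).1 htmem
    obtain ⟨h1, h2⟩ := key_min (Gs (m':=m') γ) (Ds ε m') (Ws δ) kstar lam hc t
      ((hWmem t).1 htW) htN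
    ext w
    rw [hMmem, hWeqmem]
    constructor
    · rintro ⟨hwW, hmin⟩
      exact ⟨hwW, h2 w ((hWmem w).1 hwW) (hmin t htW)⟩
    · rintro ⟨hwW, hwN⟩
      refine ⟨hwW, fun w' hw' => ?_⟩
      exact (key_min (Gs (m':=m') γ) (Ds ε m') (Ws δ) kstar lam hc w
        ((hWmem w).1 hwW) hwN).1 w' ((hWmem w').1 hw')
  -- two distinct admissible multipliers cannot both have solutions
  have hdisj : ∀ lam mu, lam ≠ mu → (∀ x, 0 ≤ 1 - lam * Gs (m':=m') γ x) →
      (∀ x, 0 ≤ 1 - mu * Gs (m':=m') γ x) →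
      (Weq lam).Nonempty → (Weq mu).Nonempty → False := by
    rintro lam mu hlm hcl hcm ⟨v, hv⟩ hmu
    have hMl := hM_eq lam hcl ⟨v, hv⟩
    have hMm := hM_eq mu hcm hmu
    have hv' : v ∈ Weq mu := by rw [← hMm, hMl]; exact hv
    obtain ⟨hvW, hvl⟩ := (hWeqmem lam v).1 hv
    obtain ⟨-, hvm⟩ := (hWeqmem mu v).1 hv'
    have hε0 : ε = 0 := by
      by_contra hε'
      have hm0 : m' ≠ 0 := fun h => hε' (hm'.2 h)
      have h1 := hvl (Sum.inl ⟨0, Nat.pos_of_ne_zero hm0⟩)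
      have h2 := hvm (Sum.inl ⟨0, Nat.pos_of_ne_zero hm0⟩)
      simp only [Gs, Ws, Ds, Sum.elim_inl, mul_zero, sub_zero, one_mul, zero_add] at h1 h2
      have h3 : (lam - mu) * ε = 0 := by linear_combination h2 - h1
      rcases mul_eq_zero.1 h3 with h | h
      · exact hlm (by linarith)
      · exact hε' h
    have hvz : ∀ i, v (Sum.inr i) = 0 ∧ δ i = 0 := by
      intro i
      have h1 := hvl (Sum.inr i)
      have h2 := hvm (Sum.inr i)
      simp only [Gs, Ws, Ds, Sum.elim_inr, mul_zero, add_zero] at h1 h2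
      have h3 : (mu - lam) * (γ i * v (Sum.inr i)) = 0 := by linear_combination h1 - h2
      have hv0 : v (Sum.inr i) = 0 := by
        rcases mul_eq_zero.1 h3 with h | h
        · exact absurd (by linarith : lam = mu) hlm
        · rcases mul_eq_zero.1 h with h' | h'
          · exact absurd h' (hne i)
          · exact h'
      refine ⟨hv0, ?_⟩
      rw [hv0, mul_zero] at h1
      exact h1.symm
    have hk0 : kstar = 0 := by
      have hQ := (hWmem v).1 hvW
      rw [Qf_sum] at hQ
      have hz1 : ∑ i, γ i * v (Sum.inr i) ^ 2 = 0 :=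
        Finset.sum_eq_zero fun i _ => by rw [(hvz i).1]; ring
      have hz2 : ∑ a : Fin m', ε * v (Sum.inl a) = 0 :=
        Finset.sum_eq_zero fun a _ => by rw [hε0]; ring
      rw [hz1, hz2] at hQ
      simpa using hQ.symm
    rcases hSingly with ⟨-, -, hδne, -⟩ | ⟨-, hkne⟩ | hεpos
    · exact hδne (funext fun i => (hvz i).2)
    · exact hkne hk0
    · exact absurd hε0 (ne_of_gt hεpos)
  -- interior Lagrangian point
  have hwlam : ∀ lam, (∀ i, 1 - lam * γ i ≠ 0) → f lam = 0 →
      (Sum.elim (fun _ => lam * ε) (fun i => δ i / (1 - lam * γ i)) ∈ Weq lam) := by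
    intro lam hden hf0
    rw [hWeqmem]
    constructor
    · rw [hWmem, Qf_sum]
      simp only [Sum.elim_inl, Sum.elim_inr]
      have h1 : ∀ i ∈ Finset.univ, γ i * (δ i / (1 - lam * γ i)) ^ 2
          = γ i * δ i ^ 2 / (1 - lam * γ i) ^ 2 := fun i _ => by rw [div_pow]; ring
      rw [Finset.sum_congr rfl h1]
      have h2 : ∑ _a : Fin m', ε * (lam * ε) = (m' : ℝ) * (ε * (lam * ε)) := by
        rw [Finset.sum_const, Finset.card_univ, Fintype.card_fin, nsmul_eq_mul]
      rw [h2]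
      have hf : (∑ i, γ i * δ i ^ 2 / (1 - lam * γ i) ^ 2) + 2 * ε ^ 2 * lam - kstar = 0 := hf0
      linear_combination hf + 2 * lam * hme
    · intro x
      cases x with
      | inl a =>
        simp only [Gs, Ws, Ds, Sum.elim_inl, mul_zero, sub_zero, one_mul, zero_add]
      | inr i =>
        simp only [Gs, Ws, Ds, Sum.elim_inr, mul_zero, add_zero]
        rw [mul_comm, div_mul_cancel₀ _ (hden i)]
  -- boundary Lagrangian point
  have hbd : ∀ j : Fin q, (∀ i, i ≠ j → 1 - (γ j)⁻¹ * γ i ≠ 0) → δ j = 0 →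
      0 ≤ -(f ((γ j)⁻¹)) / γ j → (Weq ((γ j)⁻¹)).Nonempty := by
    intro j hsep hδj hnn
    set c := (γ j)⁻¹ with hc
    refine ⟨Sum.elim (fun _ => c * ε)
      (fun i => if i = j then Real.sqrt (-(f c) / γ j) else δ i / (1 - c * γ i)), ?_⟩
    rw [hWeqmem]
    constructor
    · rw [hWmem, Qf_sum]
      simp only [Sum.elim_inl, Sum.elim_inr]
      rw [← Finset.add_sum_erase _ _ (Finset.mem_univ j)]
      rw [if_pos rfl]
      have hsq : Real.sqrt (-(f c) / γ j) ^ 2 = -(f c) / γ j := Real.sq_sqrt hnn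
      rw [hsq]
      have hjval : γ j * (-(f c) / γ j) = -(f c) := by
        rw [mul_comm, div_mul_cancel₀ _ (hne j)]
      rw [hjval]
      have herase : ∑ i ∈ Finset.univ.erase j,
          γ i * (if i = j then Real.sqrt (-(f c) / γ j) else δ i / (1 - c * γ i)) ^ 2
          = ∑ i ∈ Finset.univ.erase j, γ i * δ i ^ 2 / (1 - c * γ i) ^ 2 := by
        refine Finset.sum_congr rfl fun i hi => ?_
        rw [if_neg (Finset.mem_erase.1 hi).1, div_pow]; ring
      rw [herase]
      have hsum : ∑ i ∈ Finset.univ.erase j, γ i * δ i ^ 2 / (1 - c * γ i) ^ 2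
          = ∑ i, γ i * δ i ^ 2 / (1 - c * γ i) ^ 2 := by
        rw [← Finset.add_sum_erase _ _ (Finset.mem_univ j), hδj]
        ring
      rw [hsum]
      have h2 : ∑ _a : Fin m', ε * (c * ε) = (m' : ℝ) * (ε * (c * ε)) := by
        rw [Finset.sum_const, Finset.card_univ, Fintype.card_fin, nsmul_eq_mul]
      rw [h2]
      have hfc : f c = (∑ i, γ i * δ i ^ 2 / (1 - c * γ i) ^ 2) + 2 * ε ^ 2 * c - kstar := rfl
      linear_combination hfc + 2 * c * hme
    · intro x
      cases x with
      | inl a =>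
        simp only [Gs, Ws, Ds, Sum.elim_inl, mul_zero, sub_zero, one_mul, zero_add]
      | inr i =>
        simp only [Gs, Ws, Ds, Sum.elim_inr, mul_zero, add_zero]
        by_cases hij : i = j
        · subst hij
          rw [if_pos rfl, hc, inv_mul_cancel₀ (hne i), hδj]
          ring
        · rw [if_neg hij]
          field_simp [hsep i hij]
  -- coefficients at the boundary multipliers
  have hc1 : ∀ i, 0 ≤ 1 - (γ i0)⁻¹ * γ i := by
    intro i
    have h1 : (γ i0)⁻¹ * γ i ≤ (γ i0)⁻¹ * γ i0 :=
      mul_le_mul_of_nonneg_left (hγle i) hi0pos.le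
    rw [inv_mul_cancel₀ (hne i0)] at h1
    linarith
  have hsep1 : ∀ i, i ≠ i0 → 1 - (γ i0)⁻¹ * γ i ≠ 0 := by
    intro i h
    have h1 : (γ i0)⁻¹ * γ i < (γ i0)⁻¹ * γ i0 :=
      mul_lt_mul_of_pos_left (hγlt i h) hi0pos
    rw [inv_mul_cancel₀ (hne i0)] at h1
    exact ne_of_gt (by linarith)
  refine ⟨?_, ?_⟩
  · -- BRANCH A : 0 < γ iq
    intro hqpos
    have hΛ : Λ = Set.Iio (γ i0)⁻¹ := by rw [hΛdef, if_pos hqpos]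
    have hγipos : ∀ i, 0 < γ i := fun i => lt_of_lt_of_le hqpos (hγgeq i)
    have hcΛ : ∀ lam ∈ Λ, ∀ i, 0 < 1 - lam * γ i := by
      intro lam hlam i
      rw [hΛ, Set.mem_Iio] at hlam
      have hii : (γ i0)⁻¹ ≤ (γ i)⁻¹ := by
        apply inv_anti₀ (hγipos i) (hγle i)
      have h1 : lam < (γ i)⁻¹ := lt_of_lt_of_le hlam hii
      have h2 : lam * γ i < (γ i)⁻¹ * γ i := mul_lt_mul_of_pos_right h1 (hγipos i)
      rw [inv_mul_cancel₀ (hne i)] at h2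
      linarith
    have hΛne1 : ∀ x ∈ Λ, x ≠ (γ i0)⁻¹ := by
      intro x hx; rw [hΛ, Set.mem_Iio] at hx; exact ne_of_lt hx
    have hnb1 : (nhdsWithin ((γ i0)⁻¹) Λ).NeBot := by
      rw [hΛ]; exact nhdsLT_neBot _
    -- existence of a negative value of f
    have hex : ∃ lam ∈ Λ, f lam < 0 := by
      have htend := tendsto_sum_atBot γ δ hγipos
      have hff : f = fun lam => (∑ i, γ i * δ i ^ 2 / (1 - lam * γ i) ^ 2)
          + (2 * ε ^ 2 * lam - kstar) := by
        funext lam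
        show (∑ i, γ i * δ i ^ 2 / (1 - lam * γ i) ^ 2) + 2 * ε ^ 2 * lam - kstar = _
        ring
      have hev : ∀ᶠ lam in Filter.atBot, f lam < 0 := by
        by_cases hε0 : ε = 0
        · have hkpos : 0 < kstar := by
            have hkne : kstar ≠ 0 := by
              rcases hSingly with ⟨-, -, -, hcon⟩ | ⟨-, h⟩ | h
              · exact absurd hcon (not_lt.2 hqpos.le)
              · exact h
              · exact absurd hε0 (ne_of_gt h)
            obtain ⟨w, hw⟩ := hWne
            have hQ := (hWmem w).1 hw
            rw [Qf_sum] at hQ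
            have hz2 : ∑ a : Fin m', ε * w (Sum.inl a) = 0 :=
              Finset.sum_eq_zero fun a _ => by rw [hε0]; ring
            rw [hz2] at hQ
            have hnn : 0 ≤ kstar := by
              rw [← hQ]
              have : 0 ≤ ∑ i, γ i * w (Sum.inr i) ^ 2 :=
                Finset.sum_nonneg fun i _ => mul_nonneg (hγipos i).le (sq_nonneg _)
              linarith
            exact lt_of_le_of_ne hnn (Ne.symm hkne)
          have hff0 : f = fun lam => (∑ i, γ i * δ i ^ 2 / (1 - lam * γ i) ^ 2)
              + -kstar := by
            funext lam
            show (∑ i, γ i * δ i ^ 2 / (1 - lam * γ i) ^ 2) + 2 * ε ^ 2 * lam - kstar = _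
            rw [hε0]; ring
          have h2 : Filter.Tendsto f Filter.atBot (nhds (0 + -kstar)) := by
            rw [hff0]
            exact htend.add tendsto_const_nhds
          exact h2.eventually (eventually_lt_nhds (by linarith))
        · have hεpos : 0 < ε := lt_of_le_of_ne hε (Ne.symm hε0)
          have haff : Filter.Tendsto (fun lam : ℝ => 2 * ε ^ 2 * lam - kstar)
              Filter.atBot Filter.atBot := by
            apply Filter.tendsto_atBot_add_const_right
            exact (Filter.tendsto_const_mul_atBot_of_pos (by positivity)).2 Filter.tendsto_id
          have h2 : Filter.Tendsto f Filter.atBot Filter.atBot := by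
            rw [hff]
            apply Filter.tendsto_atBot_add_left_of_ge' _ 1 ?_ haff
            exact htend.eventually (eventually_le_nhds one_pos)
          exact h2.eventually (Filter.eventually_lt_atBot 0)
      obtain ⟨lam, h1, h2⟩ := (hev.and (Filter.eventually_lt_atBot ((γ i0)⁻¹))).exists
      exact ⟨lam, by rw [hΛ]; exact h2, h1⟩
    refine ⟨hex, ?_, ?_⟩
    · -- sup f > 0 : M = Wcirc and W1 = ∅
      rintro ⟨lam2, hlam2, hf2⟩
      obtain ⟨lam1, hlam1, hf1⟩ := hex
      have hord : Λ.OrdConnected := by rw [hΛ]; exact Set.ordConnected_Iio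
      have hcont : ∀ x ∈ Λ, ContinuousAt f x := by
        intro x hx
        rw [hfF]
        exact continuousAt_F γ δ ε kstar fun i => Or.inl (ne_of_gt (hcΛ x hx i))
      obtain ⟨lam0, hlam0, hf0⟩ := ivt_zero hord hcont hlam1 hlam2 hf1 hf2
      have hw0mem := hwlam lam0 (fun i => ne_of_gt (hcΛ lam0 hlam0 i)) hf0
      have hcoeff0 := hlift lam0 fun i => (hcΛ lam0 hlam0 i).le
      have hMW : M = Weq lam0 := hM_eq lam0 hcoeff0 ⟨_, hw0mem⟩
      constructor
      · ext w
        rw [hWcmem, hMW]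
        constructor
        · intro hw; exact ⟨lam0, hlam0, hw⟩
        · rintro ⟨mu, hmu, hwmu⟩
          by_cases hmuz : mu = lam0
          · rw [← hmuz]; exact hwmu
          · exact absurd (hdisj mu lam0 hmuz (hlift mu fun i => (hcΛ mu hmu i).le)
              hcoeff0 ⟨w, hwmu⟩ ⟨_, hw0mem⟩) (by simp)
      · rw [Set.eq_empty_iff_forall_notMem]
        intro w hw
        exact hdisj lam0 ((γ i0)⁻¹) (hΛne1 lam0 hlam0) hcoeff0 (hlift _ hc1)
          ⟨_, hw0mem⟩ ⟨w, hw⟩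
    · -- sup f ≤ 0 : M = W1 and Wcirc = ∅
      intro hsup
      have hδ00 : δ i0 = 0 := by
        by_contra hδ0ne
        have hnum : 0 < γ i0 * δ i0 ^ 2 :=
          mul_pos hpos (by positivity)
        have htop := tendsto_F_boundary_top γ δ ε kstar i0 (hne i0) hsep1 hnum
        have hsub : Λ ⊆ {x : ℝ | x ≠ (γ i0)⁻¹} := fun x hx => hΛne1 x hx
        have h := htop.mono_left (nhdsWithin_mono _ hsub)
        haveI := hnb1
        obtain ⟨x, hx1, hx2⟩ :=
          ((h.eventually (Filter.eventually_gt_atTop 0)).and eventually_mem_nhdsWithin).exists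
        have : 0 < f x := by rw [hfF]; exact hx1
        exact absurd (hsup x hx2) (not_le.2 this)
      have hf1le : f ((γ i0)⁻¹) ≤ 0 := by
        have hcont : ContinuousAt f ((γ i0)⁻¹) := by
          rw [hfF]
          apply continuousAt_F
          intro i
          by_cases hii : i = i0
          · exact Or.inr (hii ▸ hδ00)
          · exact Or.inl (hsep1 i hii)
        haveI := hnb1
        have htt : Filter.Tendsto f (nhdsWithin ((γ i0)⁻¹) Λ) (nhds (f ((γ i0)⁻¹))) :=
          hcont.mono_left nhdsWithin_le_nhds
        exact le_of_tendsto htt (eventually_mem_nhdsWithin.mono fun x hx => hsup x hx)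
      have hnn : 0 ≤ -(f ((γ i0)⁻¹)) / γ i0 :=
        div_nonneg (neg_nonneg.2 hf1le) hpos.le
      obtain ⟨w1, hw1⟩ := hbd i0 hsep1 hδ00 hnn
      have hMW : M = Weq ((γ i0)⁻¹) := hM_eq _ (hlift _ hc1) ⟨w1, hw1⟩
      refine ⟨hMW, ?_⟩
      rw [Set.eq_empty_iff_forall_notMem]
      intro w hw
      obtain ⟨mu, hmu, hwmu⟩ := (hWcmem w).1 hw
      exact hdisj mu ((γ i0)⁻¹) (hΛne1 mu hmu) (hlift mu fun i => (hcΛ mu hmu i).le)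
        (hlift _ hc1) ⟨w, hwmu⟩ ⟨w1, hw1⟩
  · -- BRANCH B : γ iq < 0
    intro hqneg
    have hΛ : Λ = Set.Ioo (γ iq)⁻¹ (γ i0)⁻¹ := by
      rw [hΛdef, if_neg (not_lt.2 hqneg.le)]
    have hiqneg : (γ iq)⁻¹ < 0 := inv_lt_zero.2 hqneg
    have hltq : (γ iq)⁻¹ < (γ i0)⁻¹ := lt_trans hiqneg hi0pos
    have hcΛ : ∀ lam ∈ Λ, ∀ i, 0 < 1 - lam * γ i := by
      intro lam hlam i
      rw [hΛ, Set.mem_Ioo] at hlam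
      rcases (hne i).lt_or_gt with hγi | hγi
      · have h2 : lam * γ i < (γ iq)⁻¹ * γ i := mul_lt_mul_of_neg_right hlam.1 hγi
        have h3 : (γ iq)⁻¹ * γ i ≤ (γ iq)⁻¹ * γ iq :=
          mul_le_mul_of_nonpos_left (hγgeq i) hiqneg.le
        rw [inv_mul_cancel₀ (hne iq)] at h3
        linarith
      · have hii : (γ i0)⁻¹ ≤ (γ i)⁻¹ := inv_anti₀ hγi (hγle i)
        have h1 : lam < (γ i)⁻¹ := lt_of_lt_of_le hlam.2 hii
        have h2 : lam * γ i < (γ i)⁻¹ * γ i := mul_lt_mul_of_pos_right h1 hγi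
        rw [inv_mul_cancel₀ (hne i)] at h2
        linarith
    have hΛne1 : ∀ x ∈ Λ, x ≠ (γ i0)⁻¹ := by
      intro x hx; rw [hΛ, Set.mem_Ioo] at hx; exact ne_of_lt hx.2
    have hΛneq : ∀ x ∈ Λ, x ≠ (γ iq)⁻¹ := by
      intro x hx; rw [hΛ, Set.mem_Ioo] at hx; exact ne_of_gt hx.1
    have hnb1 : (nhdsWithin ((γ i0)⁻¹) Λ).NeBot := by
      rw [hΛ, ← mem_closure_iff_nhdsWithin_neBot, closure_Ioo (ne_of_lt hltq)]
      exact ⟨hltq.le, le_refl _⟩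
    have hnbq : (nhdsWithin ((γ iq)⁻¹) Λ).NeBot := by
      rw [hΛ, ← mem_closure_iff_nhdsWithin_neBot, closure_Ioo (ne_of_lt hltq)]
      exact ⟨le_refl _, hltq.le⟩
    have hcq : ∀ i, 0 ≤ 1 - (γ iq)⁻¹ * γ i := by
      intro i
      have h1 : (γ iq)⁻¹ * γ i ≤ (γ iq)⁻¹ * γ iq :=
        mul_le_mul_of_nonpos_left (hγgeq i) hiqneg.le
      rw [inv_mul_cancel₀ (hne iq)] at h1
      linarith
    have hsepq : ∀ i, i ≠ iq → 1 - (γ iq)⁻¹ * γ i ≠ 0 := by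
      intro i h
      have h1 : (γ iq)⁻¹ * γ i < (γ iq)⁻¹ * γ iq :=
        mul_lt_mul_of_neg_left (hγgtq i h) hiqneg
      rw [inv_mul_cancel₀ (hne iq)] at h1
      exact ne_of_gt (by linarith)
    refine ⟨?_, ?_, ?_⟩
    · -- inf f < 0 < sup f : M = Wcirc, W1 = ∅, Wq = ∅
      rintro ⟨⟨lam1, hlam1, hf1⟩, ⟨lam2, hlam2, hf2⟩⟩
      have hord : Λ.OrdConnected := by rw [hΛ]; exact Set.ordConnected_Ioo
      have hcont : ∀ x ∈ Λ, ContinuousAt f x := by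
        intro x hx
        rw [hfF]
        exact continuousAt_F γ δ ε kstar fun i => Or.inl (ne_of_gt (hcΛ x hx i))
      obtain ⟨lam0, hlam0, hf0⟩ := ivt_zero hord hcont hlam1 hlam2 hf1 hf2
      have hw0mem := hwlam lam0 (fun i => ne_of_gt (hcΛ lam0 hlam0 i)) hf0
      have hcoeff0 := hlift lam0 fun i => (hcΛ lam0 hlam0 i).le
      have hMW : M = Weq lam0 := hM_eq lam0 hcoeff0 ⟨_, hw0mem⟩
      refine ⟨?_, ?_, ?_⟩
      · ext w
        rw [hWcmem, hMW]
        constructor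
        · intro hw; exact ⟨lam0, hlam0, hw⟩
        · rintro ⟨mu, hmu, hwmu⟩
          by_cases hmuz : mu = lam0
          · rw [← hmuz]; exact hwmu
          · exact absurd (hdisj mu lam0 hmuz (hlift mu fun i => (hcΛ mu hmu i).le)
              hcoeff0 ⟨w, hwmu⟩ ⟨_, hw0mem⟩) (by simp)
      · rw [Set.eq_empty_iff_forall_notMem]
        intro w hw
        exact hdisj lam0 ((γ i0)⁻¹) (hΛne1 lam0 hlam0) hcoeff0 (hlift _ hc1)
          ⟨_, hw0mem⟩ ⟨w, hw⟩
      · rw [Set.eq_empty_iff_forall_notMem]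
        intro w hw
        exact hdisj lam0 ((γ iq)⁻¹) (hΛneq lam0 hlam0) hcoeff0 (hlift _ hcq)
          ⟨_, hw0mem⟩ ⟨w, hw⟩
    · -- sup f ≤ 0 : M = W1, Wcirc = ∅, Wq = ∅
      intro hsup
      have hδ00 : δ i0 = 0 := by
        by_contra hδ0ne
        have hnum : 0 < γ i0 * δ i0 ^ 2 := mul_pos hpos (by positivity)
        have htop := tendsto_F_boundary_top γ δ ε kstar i0 (hne i0) hsep1 hnum
        have hsub : Λ ⊆ {x : ℝ | x ≠ (γ i0)⁻¹} := fun x hx => hΛne1 x hx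
        have h := htop.mono_left (nhdsWithin_mono _ hsub)
        haveI := hnb1
        obtain ⟨x, hx1, hx2⟩ :=
          ((h.eventually (Filter.eventually_gt_atTop 0)).and eventually_mem_nhdsWithin).exists
        have : 0 < f x := by rw [hfF]; exact hx1
        exact absurd (hsup x hx2) (not_le.2 this)
      have hf1le : f ((γ i0)⁻¹) ≤ 0 := by
        have hcont : ContinuousAt f ((γ i0)⁻¹) := by
          rw [hfF]
          apply continuousAt_F
          intro i
          by_cases hii : i = i0
          · exact Or.inr (hii ▸ hδ00)
          · exact Or.inl (hsep1 i hii)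
        haveI := hnb1
        have htt : Filter.Tendsto f (nhdsWithin ((γ i0)⁻¹) Λ) (nhds (f ((γ i0)⁻¹))) :=
          hcont.mono_left nhdsWithin_le_nhds
        exact le_of_tendsto htt (eventually_mem_nhdsWithin.mono fun x hx => hsup x hx)
      have hnn : 0 ≤ -(f ((γ i0)⁻¹)) / γ i0 :=
        div_nonneg (neg_nonneg.2 hf1le) hpos.le
      obtain ⟨w1, hw1⟩ := hbd i0 hsep1 hδ00 hnn
      have hMW : M = Weq ((γ i0)⁻¹) := hM_eq _ (hlift _ hc1) ⟨w1, hw1⟩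
      refine ⟨hMW, ?_, ?_⟩
      · rw [Set.eq_empty_iff_forall_notMem]
        intro w hw
        obtain ⟨mu, hmu, hwmu⟩ := (hWcmem w).1 hw
        exact hdisj mu ((γ i0)⁻¹) (hΛne1 mu hmu) (hlift mu fun i => (hcΛ mu hmu i).le)
          (hlift _ hc1) ⟨w, hwmu⟩ ⟨w1, hw1⟩
      · rw [Set.eq_empty_iff_forall_notMem]
        intro w hw
        exact hdisj ((γ i0)⁻¹) ((γ iq)⁻¹) (ne_of_lt hltq).symm (hlift _ hc1)
          (hlift _ hcq) ⟨w1, hw1⟩ ⟨w, hw⟩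
    · -- inf f ≥ 0 : M = Wq, Wcirc = ∅, W1 = ∅
      intro hinf
      have hδqq : δ iq = 0 := by
        by_contra hδqne
        have hnum : γ iq * δ iq ^ 2 < 0 := mul_neg_of_neg_of_pos hqneg (by positivity)
        have hbot := tendsto_F_boundary_bot γ δ ε kstar iq (hne iq) hsepq hnum
        have hsub : Λ ⊆ {x : ℝ | x ≠ (γ iq)⁻¹} := fun x hx => hΛneq x hx
        have h := hbot.mono_left (nhdsWithin_mono _ hsub)
        haveI := hnbq
        obtain ⟨x, hx1, hx2⟩ :=
          ((h.eventually (Filter.eventually_lt_atBot 0)).and eventually_mem_nhdsWithin).exists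
        have : f x < 0 := by rw [hfF]; exact hx1
        exact absurd (hinf x hx2) (not_le.2 this)
      have hfqge : 0 ≤ f ((γ iq)⁻¹) := by
        have hcont : ContinuousAt f ((γ iq)⁻¹) := by
          rw [hfF]
          apply continuousAt_F
          intro i
          by_cases hii : i = iq
          · exact Or.inr (hii ▸ hδqq)
          · exact Or.inl (hsepq i hii)
        haveI := hnbq
        have htt : Filter.Tendsto f (nhdsWithin ((γ iq)⁻¹) Λ) (nhds (f ((γ iq)⁻¹))) :=
          hcont.mono_left nhdsWithin_le_nhds
        exact ge_of_tendsto htt (eventually_mem_nhdsWithin.mono fun x hx => hinf x hx)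
      have hnn : 0 ≤ -(f ((γ iq)⁻¹)) / γ iq :=
        div_nonneg_of_nonpos (neg_nonpos.2 hfqge) hqneg.le
      obtain ⟨wq, hwq⟩ := hbd iq hsepq hδqq hnn
      have hMW : M = Weq ((γ iq)⁻¹) := hM_eq _ (hlift _ hcq) ⟨wq, hwq⟩
      refine ⟨hMW, ?_, ?_⟩
      · rw [Set.eq_empty_iff_forall_notMem]
        intro w hw
        obtain ⟨mu, hmu, hwmu⟩ := (hWcmem w).1 hw
        exact hdisj mu ((γ iq)⁻¹) (hΛneq mu hmu) (hlift mu fun i => (hcΛ mu hmu i).le)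
          (hlift _ hcq) ⟨w, hwmu⟩ ⟨wq, hwq⟩
      · rw [Set.eq_empty_iff_forall_notMem]
        intro w hw
        exact hdisj ((γ iq)⁻¹) ((γ i0)⁻¹) (ne_of_lt hltq) (hlift _ hcq)
          (hlift _ hc1) ⟨wq, hwq⟩ ⟨w, hw⟩
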